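/- For every z ∈ ℂ with Re z > 0, the integral I₁(z) := ∫₀^∞ (i−t)·exp((i−t)z)/√(t²−2it) dt converges absolutely and satisfies |(2/π)·I₁(z)| ≤ |exp(iz)|·( √(2/(π·Re z)) + 2/(π·Re z) ); equivalently, the Hankel function of the first kind of order one, H₁^{(1)}(z) = (2i/π)∫₀^∞ (i−t)·exp((i−t)z)/√(t²−2it) dt, satisfies |H₁^{(1)}(z)| ≤ |exp(iz)|·( √(2/(π·Re z)) + 2/(π·Re z) ). -/

import Mathlib

noncomputable section

open Complex MeasureTheory

/-- The principal branch of the complex square root. -/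
def csqrt (z : ℂ) : ℂ := z ^ (1 / 2 : ℂ)

open Set in
lemma hankel_key_ineq {t : ℝ} (ht : 0 < t) :
    Real.sqrt (1 + t ^ 2) ≤
      (1 / Real.sqrt (2 * t) + 1) * Real.sqrt (t * Real.sqrt (t ^ 2 + 4)) := by
  set b := Real.sqrt (t ^ 2 + 4) with hbdef
  have hb0 : 0 < b := Real.sqrt_pos.mpr (by positivity)
  have hb2 : b ^ 2 = t ^ 2 + 4 := Real.sq_sqrt (by positivity)
  set s := Real.sqrt (2 * t) with hsdef
  have hs0 : 0 < s := Real.sqrt_pos.mpr (by linarith)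
  have hs2 : s ^ 2 = 2 * t := Real.sq_sqrt (by linarith)
  have h2 : 1 + t ^ 2 ≤ (1 / 2 + t) * b := by
    have h1 : (1 + t ^ 2) ^ 2 ≤ ((1 / 2 + t) * b) ^ 2 := by
      rw [mul_pow, hb2]; nlinarith [ht.le, pow_pos ht 3]
    have := Real.sqrt_le_sqrt h1
    rwa [Real.sqrt_sq (by positivity), Real.sqrt_sq (by positivity)] at this
  have h3 : Real.sqrt (1 + t ^ 2) ^ 2 ≤ ((1 / s + 1) * Real.sqrt (t * b)) ^ 2 := by
    rw [Real.sq_sqrt (by positivity : (0:ℝ) ≤ 1 + t ^ 2), mul_pow,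
      Real.sq_sqrt (by positivity : (0:ℝ) ≤ t * b)]
    have e : (1 / s + 1) ^ 2 = 1 / (2 * t) + 2 / s + 1 := by
      rw [← hs2]; ring
    rw [e]
    have e2 : (1 / (2 * t) + 1) * (t * b) = (1 / 2 + t) * b := by
      field_simp
    have h4 : 0 ≤ 2 / s * (t * b) := by positivity
    nlinarith [h2, e2, h4]
  have := Real.sqrt_le_sqrt h3
  rwa [Real.sqrt_sq (Real.sqrt_nonneg _), Real.sqrt_sq (by positivity)] at this

lemma hankel_norm_f (z : ℂ) {t : ℝ} (ht : 0 < t) :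
    ‖(Complex.I - (t : ℂ)) * Complex.exp ((Complex.I - (t : ℂ)) * z) /
        csqrt ((t : ℂ) ^ 2 - 2 * Complex.I * t)‖ =
      Real.sqrt (1 + t ^ 2) / Real.sqrt (t * Real.sqrt (t ^ 2 + 4)) *
        (Real.exp (-z.im) * Real.exp (-(z.re * t))) := by
  have him' : ((t : ℂ) ^ 2 - 2 * Complex.I * t).im = -(2 * t) := by
    simp [← Complex.ofReal_pow]
  have hw : ((t : ℂ) ^ 2 - 2 * Complex.I * t) ≠ 0 := by
    intro h
    rw [h] at him'
    simp at him'
    linarith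
  have h1 : ‖Complex.I - (t : ℂ)‖ = Real.sqrt (1 + t ^ 2) := by
    rw [Complex.norm_def, Complex.normSq_apply]
    simp
    ring_nf
  have h2 : ‖Complex.exp ((Complex.I - (t : ℂ)) * z)‖ =
      Real.exp (-z.im) * Real.exp (-(z.re * t)) := by
    rw [Complex.norm_exp, ← Real.exp_add]
    congr 1
    simp [Complex.sub_re, Complex.sub_im, Complex.mul_re]
    ring
  have h3 : ‖csqrt ((t : ℂ) ^ 2 - 2 * Complex.I * t)‖ =
      Real.sqrt (t * Real.sqrt (t ^ 2 + 4)) := by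
    rw [csqrt, show (1/2 : ℂ) = ((1/2 : ℝ) : ℂ) by norm_num,
      Complex.norm_cpow_of_ne_zero hw]
    simp only [Complex.ofReal_im, Complex.ofReal_re, mul_zero, Real.exp_zero, div_one]
    have habs : ‖(t : ℂ) ^ 2 - 2 * Complex.I * t‖ =
        t * Real.sqrt (t ^ 2 + 4) := by
      rw [Complex.norm_def, Complex.normSq_apply]
      have hre' : ((t : ℂ) ^ 2 - 2 * Complex.I * t).re = t ^ 2 := by
        simp [← Complex.ofReal_pow]
      rw [hre', him']
      rw [show t ^ 2 * t ^ 2 + -(2*t) * -(2*t) = (t^2) * (t ^ 2 + 4) by ring,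
        Real.sqrt_mul (by positivity), Real.sqrt_sq ht.le]
    rw [habs, ← Real.sqrt_eq_rpow]
  rw [norm_div, norm_mul, h1, h2, h3]
  ring

open Set in
lemma hankel_contOn (z : ℂ) : ContinuousOn
    (fun t : ℝ => (Complex.I - (t : ℂ)) * Complex.exp ((Complex.I - (t : ℂ)) * z) /
      csqrt ((t : ℂ) ^ 2 - 2 * Complex.I * t)) (Set.Ioi 0) := by
  have hnum : Continuous (fun t : ℝ =>
      (Complex.I - (t : ℂ)) * Complex.exp ((Complex.I - (t : ℂ)) * z)) := by fun_prop
  apply ContinuousOn.div (hnum.continuousOn)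
  · intro t ht
    rw [mem_Ioi] at ht
    apply ContinuousAt.continuousWithinAt
    apply ContinuousAt.cpow (by fun_prop) continuousAt_const
    left
    simp [← Complex.ofReal_pow]
    positivity
  · intro t ht
    rw [mem_Ioi] at ht
    rw [csqrt, Ne, Complex.cpow_eq_zero_iff]
    push_neg
    intro h
    exfalso
    have him' : ((t : ℂ) ^ 2 - 2 * Complex.I * t).im = -(2 * t) := by
      simp [← Complex.ofReal_pow]
    rw [h] at him'
    simp at him'
    linarith

lemma hankel_final_arith {x : ℝ} (hx : 0 < x) :
    2 / Real.pi * ((Real.sqrt 2)⁻¹ * ((1/x) ^ ((1:ℝ)/2) * Real.sqrt Real.pi) + 1/x)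
      = Real.sqrt (2 / (Real.pi * x)) + 2 / (Real.pi * x) := by
  have hπ : (0:ℝ) < Real.pi := Real.pi_pos
  have hsπ : (0:ℝ) < Real.sqrt Real.pi := Real.sqrt_pos.mpr hπ
  have hsx : (0:ℝ) < Real.sqrt x := Real.sqrt_pos.mpr hx
  have hs2 : (0:ℝ) < Real.sqrt 2 := Real.sqrt_pos.mpr (by norm_num)
  have h1 : (1/x) ^ ((1:ℝ)/2) = (Real.sqrt x)⁻¹ := by
    rw [← Real.sqrt_eq_rpow, one_div, Real.sqrt_inv]
  have h2 : Real.sqrt (2 / (Real.pi * x)) = Real.sqrt 2 / (Real.sqrt Real.pi * Real.sqrt x) := by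
    rw [Real.sqrt_div' 2 (by positivity), Real.sqrt_mul hπ.le]
  rw [h1, h2]
  field_simp
  ring_nf
  linear_combination (2*x) * (Real.sq_sqrt hπ.le)
    - (x*Real.pi) * (Real.sq_sqrt (by norm_num : (0:ℝ) ≤ 2))

open Set in
/-- For `Re z > 0`, the integral representation
`H₁⁽¹⁾(z) = (2i/π) ∫₀^∞ (i−t)·exp((i−t)z)/√(t²−2it) dt` of the Hankel function of the first kind
of order one converges absolutely and
`|H₁⁽¹⁾(z)| ≤ |exp(iz)|·(√(2/(π·Re z)) + 2/(π·Re z))`. -/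
theorem hankel_one_bound (z : ℂ) (hz : 0 < z.re) :
    IntegrableOn
      (fun t : ℝ => (Complex.I - (t : ℂ)) * Complex.exp ((Complex.I - (t : ℂ)) * z) /
        csqrt ((t : ℂ) ^ 2 - 2 * Complex.I * t))
      (Set.Ioi 0) volume ∧
    ‖((2 : ℂ) / (Real.pi : ℂ)) *
        ∫ t in Set.Ioi (0 : ℝ),
          (Complex.I - (t : ℂ)) * Complex.exp ((Complex.I - (t : ℂ)) * z) /
            csqrt ((t : ℂ) ^ 2 - 2 * Complex.I * t)‖ ≤
      ‖Complex.exp (Complex.I * z)‖ * (Real.sqrt (2 / (Real.pi * z.re)) + 2 / (Real.pi * z.re)) := by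
  set f : ℝ → ℂ := fun t : ℝ =>
    (Complex.I - (t : ℂ)) * Complex.exp ((Complex.I - (t : ℂ)) * z) /
      csqrt ((t : ℂ) ^ 2 - 2 * Complex.I * t) with hf
  set C : ℝ := ‖Complex.exp (Complex.I * z)‖ with hC
  have hCval : C = Real.exp (-z.im) := by
    rw [hC, Complex.norm_exp]
    congr 1
    simp
  have hC0 : 0 ≤ C := norm_nonneg _
  set g : ℝ → ℝ := fun t => C * ((Real.sqrt 2)⁻¹ * (t ^ (-(1/2) : ℝ) *
    Real.exp (-(z.re * t))) + Real.exp (-(z.re * t))) with hg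
  have hg1 : IntegrableOn (fun t : ℝ => t ^ (-(1/2) : ℝ) * Real.exp (-(z.re * t))) (Ioi 0) := by
    have := integrableOn_rpow_mul_exp_neg_mul_rpow (by norm_num : (-1:ℝ) < -(1/2)) (by norm_num : (0:ℝ) < 1) hz
    simpa [Real.rpow_one, neg_mul] using this
  have hg2 : IntegrableOn (fun t : ℝ => Real.exp (-(z.re * t))) (Ioi 0) := by
    simpa [neg_mul] using exp_neg_integrableOn_Ioi 0 hz
  have hgint : IntegrableOn g (Ioi 0) :=
    (((hg1.const_mul ((Real.sqrt 2)⁻¹)).add hg2).const_mul C)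
  have hbound : ∀ t ∈ Ioi (0:ℝ), ‖f t‖ ≤ g t := by
    intro t ht
    rw [mem_Ioi] at ht
    rw [hf]
    rw [hankel_norm_f z ht, hg, hCval]
    beta_reduce
    have hrw : (Real.sqrt 2)⁻¹ * t ^ (-(1/2) : ℝ) = 1 / Real.sqrt (2 * t) := by
      rw [Real.rpow_neg ht.le, ← Real.sqrt_eq_rpow,
        Real.sqrt_mul (by norm_num : (0:ℝ) ≤ 2), one_div, mul_inv]
    have hratio : Real.sqrt (1 + t ^ 2) / Real.sqrt (t * Real.sqrt (t ^ 2 + 4)) ≤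
        1 / Real.sqrt (2 * t) + 1 := by
      rw [div_le_iff₀ (Real.sqrt_pos.mpr (by positivity))]
      exact hankel_key_ineq ht
    have hrhs : Real.exp (-z.im) * ((Real.sqrt 2)⁻¹ * (t ^ (-(1/2) : ℝ) *
        Real.exp (-(z.re * t))) + Real.exp (-(z.re * t))) =
        (1 / Real.sqrt (2 * t) + 1) * (Real.exp (-z.im) * Real.exp (-(z.re * t))) := by
      rw [← hrw]; ring
    rw [hrhs]
    exact mul_le_mul_of_nonneg_right hratio (by positivity)
  have hmeas : AEStronglyMeasurable f (volume.restrict (Ioi 0)) :=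
    (hankel_contOn z).aestronglyMeasurable measurableSet_Ioi
  have hbae : ∀ᵐ t ∂(volume.restrict (Ioi 0)), ‖f t‖ ≤ g t :=
    (ae_restrict_iff' measurableSet_Ioi).mpr (Filter.Eventually.of_forall hbound)
  have hfint : IntegrableOn f (Ioi 0) := Integrable.mono' hgint hmeas hbae
  refine ⟨hfint, ?_⟩
  have hnormint : ‖∫ t in Ioi (0:ℝ), f t‖ ≤ ∫ t in Ioi (0:ℝ), g t :=
    norm_integral_le_of_norm_le hgint hbae
  have e1 : ∫ t in Ioi (0:ℝ), t ^ (-(1/2) : ℝ) * Real.exp (-(z.re * t)) =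
      (1/z.re) ^ ((1:ℝ)/2) * Real.sqrt Real.pi := by
    have := Real.integral_rpow_mul_exp_neg_mul_Ioi (by norm_num : (0:ℝ) < 1/2) hz
    rw [show ((1:ℝ)/2 - 1) = -(1/2) by norm_num, Real.Gamma_one_half_eq] at this
    exact this
  have e2 : ∫ t in Ioi (0:ℝ), Real.exp (-(z.re * t)) = 1 / z.re := by
    have := Real.integral_rpow_mul_exp_neg_mul_Ioi (by norm_num : (0:ℝ) < 1) hz
    simpa using this
  have hgval : ∫ t in Ioi (0:ℝ), g t =
      C * ((Real.sqrt 2)⁻¹ * ((1/z.re) ^ ((1:ℝ)/2) * Real.sqrt Real.pi) + 1/z.re) := by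
    rw [hg]
    rw [MeasureTheory.integral_const_mul]
    rw [integral_add (hg1.const_mul ((Real.sqrt 2)⁻¹)) hg2]
    rw [MeasureTheory.integral_const_mul]
    rw [e1, e2]
  have hnorm2π : ‖((2:ℂ)/(Real.pi:ℂ))‖ = 2 / Real.pi := by
    rw [norm_div]
    simp [Complex.norm_real, abs_of_pos Real.pi_pos]
  calc ‖((2:ℂ)/(Real.pi:ℂ)) * ∫ t in Ioi (0:ℝ), f t‖
      = 2 / Real.pi * ‖∫ t in Ioi (0:ℝ), f t‖ := by rw [norm_mul, hnorm2π]
    _ ≤ 2 / Real.pi * ∫ t in Ioi (0:ℝ), g t := by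
        exact mul_le_mul_of_nonneg_left hnormint (by positivity)
    _ = C * (2 / Real.pi *
          ((Real.sqrt 2)⁻¹ * ((1/z.re) ^ ((1:ℝ)/2) * Real.sqrt Real.pi) + 1/z.re)) := by
        rw [hgval]; ring
    _ = C * (Real.sqrt (2 / (Real.pi * z.re)) + 2 / (Real.pi * z.re)) := by
        rw [hankel_final_arith hz]
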